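/- Let I be a type, (K_i)_{i∈I} a family of fields, and R := ∏_{i∈I} K_i. For x ∈ R set Z(x) := {i ∈ I | x_i = 0}. Under the bijection a ↦ 𝓕(a) = {Z(x) | x ∈ a} between ideals of R and filters on I, an ideal a is a maximal ideal of R if and only if 𝓕(a) is an ultrafilter on I (a proper filter, not containing ∅, that is maximal under inclusion among proper filters; equivalently, for every subset S ⊆ I either S ∈ 𝓕(a) or its complement lies in 𝓕(a)). -/

import Mathlib

/-- A filter of sets on `I`: a collection of subsets of `I` containing `I` itself,
closed under finite (binary) intersections and under taking supersets. -/
def IsSetFilter (I : Type*) (𝓕 : Set (Set I)) : Prop :=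
  Set.univ ∈ 𝓕 ∧ (∀ A ∈ 𝓕, ∀ B ∈ 𝓕, A ∩ B ∈ 𝓕) ∧ (∀ A ∈ 𝓕, ∀ B : Set I, A ⊆ B → B ∈ 𝓕)

/-- An ultrafilter of sets on `I`: a proper filter (not containing `∅`) that is
maximal under inclusion among proper filters. -/
def IsUltraSetFilter (I : Type*) (𝓕 : Set (Set I)) : Prop :=
  IsSetFilter I 𝓕 ∧ (∅ : Set I) ∉ 𝓕 ∧
    ∀ 𝓖 : Set (Set I), IsSetFilter I 𝓖 → (∅ : Set I) ∉ 𝓖 → 𝓕 ⊆ 𝓖 → 𝓖 = 𝓕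


section Aux
variable {I : Type*} {K : I → Type*} [∀ i, Field (K i)]

open Classical in
/-- The filter associated to an ideal is a set filter. -/
lemma piFields_isSetFilter (a : Ideal (∀ i, K i)) :
    IsSetFilter I {S : Set I | ∃ x ∈ a, {i : I | x i = 0} = S} := by
  classical
  refine ⟨⟨0, a.zero_mem, by ext i; simp⟩, ?_, ?_⟩
  · rintro _ ⟨x, hx, rfl⟩ _ ⟨y, hy, rfl⟩
    refine ⟨(fun i => if x i = 0 then 0 else 1) * x + (fun i => if x i = 0 then 1 else 0) * y,
      a.add_mem (a.mul_mem_left _ hx) (a.mul_mem_left _ hy), ?_⟩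
    ext i
    by_cases h : x i = 0 <;> simp [h]
  · rintro _ ⟨x, hx, rfl⟩ B hB
    refine ⟨(fun i => if i ∈ B then 0 else (x i)⁻¹) * x, a.mul_mem_left _ hx, ?_⟩
    ext i
    by_cases h : i ∈ B
    · simp [h]
    · have hxi : x i ≠ 0 := fun h0 => h (hB h0)
      simp [h, inv_mul_cancel₀ hxi, hxi]

lemma piFields_mem_of_zero_set (a : Ideal (∀ i, K i)) {x : ∀ i, K i}
    (h : {i : I | x i = 0} ∈ {S : Set I | ∃ x ∈ a, {i : I | x i = 0} = S}) : x ∈ a := by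
  classical
  obtain ⟨z, hz, hzx⟩ := h
  have : x = (fun i => x i * (z i)⁻¹) * z := by
    ext i
    by_cases h : z i = 0
    · have : x i = 0 := by
        have hm : i ∈ ({i : I | z i = 0} : Set I) := h
        rw [hzx] at hm
        exact hm
      simp [h, this]
    · simp only [Pi.mul_apply]; rw [inv_mul_cancel_right₀ h]
  rw [this]
  exact a.mul_mem_left _ hz

lemma piFields_empty_mem_iff (a : Ideal (∀ i, K i)) :
    (∅ : Set I) ∈ {S : Set I | ∃ x ∈ a, {i : I | x i = 0} = S} ↔ a = ⊤ := by
  constructor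
  · rintro ⟨x, hx, hZ⟩
    have hne : ∀ i, x i ≠ 0 := fun i hi => by
      have : i ∈ ({i : I | x i = 0} : Set I) := hi
      rw [hZ] at this
      exact this
    rw [Ideal.eq_top_iff_one]
    have : (1 : ∀ i, K i) = (fun i => (x i)⁻¹) * x := by
      ext i; simp [inv_mul_cancel₀ (hne i)]
    rw [this]
    exact a.mul_mem_left _ hx
  · rintro rfl
    exact ⟨1, trivial, by ext i; simp⟩

end Aux
/-- For a product `R = ∏ i, K i` of fields, under the correspondence
`a ↦ {Z x | x ∈ a}` (where `Z x = {i | x i = 0}`) between ideals of `R` and filters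
on `I`, an ideal `a` is maximal if and only if the corresponding filter is an
ultrafilter on `I`. -/
theorem isMaximal_iff_ultrafilter_of_pi_fields (I : Type*) (K : I → Type*)
    [∀ i, Field (K i)] (a : Ideal (∀ i, K i)) :
    a.IsMaximal ↔ IsUltraSetFilter I {S : Set I | ∃ x ∈ a, {i : I | x i = 0} = S} := by
  classical
  constructor
  · intro h
    refine ⟨piFields_isSetFilter a, ?_, ?_⟩
    · intro hmem
      exact h.ne_top ((piFields_empty_mem_iff a).mp hmem)
    · intro 𝓖 hG hGne hsub
      set b : Ideal (∀ i, K i) :=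
        { carrier := {x | {i : I | x i = 0} ∈ 𝓖}
          add_mem' := fun {x y} hx hy => hG.2.2 _ (hG.2.1 _ hx _ hy) _ (fun i hi => by
            simp only [Set.mem_inter_iff, Set.mem_setOf_eq] at hi ⊢
            show x i + y i = 0
            rw [hi.1, hi.2, add_zero])
          zero_mem' := by
            have : ({i : I | (0 : ∀ i, K i) i = 0} : Set I) = Set.univ := by ext i; simp
            simpa [this] using hG.1
          smul_mem' := fun c x hx => hG.2.2 _ hx _ (fun i hi => by
            simp only [Set.mem_setOf_eq] at hi ⊢
            simp [hi]) } with hb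
      have hab : a ≤ b := fun x hx => hsub ⟨x, hx, rfl⟩
      have hbne : b ≠ ⊤ := by
        intro htop
        have h1 : (1 : ∀ i, K i) ∈ b := htop ▸ trivial
        have : ({i : I | (1 : ∀ i, K i) i = 0} : Set I) = ∅ := by ext i; simp
        exact hGne (this ▸ h1)
      have hba : a = b := h.eq_of_le hbne hab
      apply Set.Subset.antisymm _ hsub
      intro S hS
      refine ⟨fun i => if i ∈ S then 0 else 1, ?_, ?_⟩
      · rw [hba]
        show ({i : I | (if i ∈ S then (0 : K i) else 1) = 0} : Set I) ∈ 𝓖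
        have : ({i : I | (if i ∈ S then (0 : K i) else 1) = 0} : Set I) = S := by
          ext i; by_cases h : i ∈ S <;> simp [h]
        rwa [this]
      · ext i; by_cases h : i ∈ S <;> simp [h]
  · rintro ⟨hfil, hempty, hmax⟩
    rw [Ideal.isMaximal_def]
    constructor
    · intro htop
      exact hempty ((piFields_empty_mem_iff a).mpr htop)
    · intro b hab
      by_contra hbne
      have hGfil := piFields_isSetFilter b
      have hGne : (∅ : Set I) ∉ {S : Set I | ∃ x ∈ b, {i : I | x i = 0} = S} := by
        intro hmem
        exact hbne ((piFields_empty_mem_iff b).mp hmem)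
      have hsub : {S : Set I | ∃ x ∈ a, {i : I | x i = 0} = S} ⊆
          {S : Set I | ∃ x ∈ b, {i : I | x i = 0} = S} := by
        rintro _ ⟨x, hx, rfl⟩
        exact ⟨x, hab.le hx, rfl⟩
      have heq := hmax _ hGfil hGne hsub
      have hba : b ≤ a := fun x hx =>
        piFields_mem_of_zero_set a (heq ▸ (⟨x, hx, rfl⟩ :
          {i : I | x i = 0} ∈ {S : Set I | ∃ x ∈ b, {i : I | x i = 0} = S}))
      exact hab.ne (le_antisymm hab.le hba)
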